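/- The map n ↦ 2^n on an ordered semiring is strictly monotone, and for rationals p/q < r/s (with q, s > 0), the rational approximation of 2^(p/q) is strictly less than that of 2^(r/s): concretely, in ℕ, if p*s < r*q then (appr(n, 2^p, q)) / n eventually stays below (appr(n, 2^r, s)) / n, where appr(n,a,b) is the largest m with m^b ≤ n^b * a. -/
import Mathlib


/-- `appr n a b` is the largest `m` with `m ^ b ≤ n ^ b * a`. -/
def appr (n a b : ℕ) : ℕ := Nat.findGreatest (fun m => m ^ b ≤ n ^ b * a) (n ^ b * a)

lemma pow_succ_le_aux (B k : ℕ) : (B+1)^(k+1) ≤ B^(k+1) + (k+1)*(B+1)^k := by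
  induction k with
  | zero => simp
  | succ j ih =>
    have h2 : B^(j+1) ≤ (B+1)^(j+1) := Nat.pow_le_pow_left (by omega) _
    calc (B+1)^(j+1+1) = (B+1)^(j+1) * (B+1) := by ring
      _ ≤ (B^(j+1) + (j+1)*(B+1)^j) * (B+1) := Nat.mul_le_mul_right _ ih
      _ = B^(j+1+1) + B^(j+1) + (j+1)*(B+1)^(j+1) := by ring
      _ ≤ B^(j+1+1) + (B+1)^(j+1) + (j+1)*(B+1)^(j+1) := by omega
      _ = B^(j+1+1) + (j+1+1)*(B+1)^(j+1) := by ring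

lemma two_mul_bound (k B : ℕ) (hB : k * 2^k ≤ B) : (B+1)^k ≤ 2 * B^k := by
  cases k with
  | zero => simp
  | succ j =>
    have hB1 : 1 ≤ B := by
      have : 1 ≤ (j+1) * 2^(j+1) := Nat.one_le_iff_ne_zero.mpr (by positivity)
      omega
    have h1 := pow_succ_le_aux B j
    have h2 : (B+1)^j ≤ 2^j * B^j := by
      calc (B+1)^j ≤ (2*B)^j := Nat.pow_le_pow_left (by omega) j
      _ = 2^j * B^j := by rw [mul_pow]
    have h3 : (j+1) * (2^j * B^j) ≤ B * B^j := by
      rw [← mul_assoc]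
      apply Nat.mul_le_mul_right
      have h4 : (j+1) * 2^j ≤ (j+1) * 2^(j+1) :=
        Nat.mul_le_mul_left _ (Nat.pow_le_pow_right (by norm_num) (by omega))
      omega
    calc (B+1)^(j+1) ≤ B^(j+1) + (j+1)*(B+1)^j := h1
      _ ≤ B^(j+1) + (j+1)*(2^j*B^j) := by
          have := Nat.mul_le_mul_left (j+1) h2
          omega
      _ ≤ B^(j+1) + B*B^j := by omega
      _ = 2*B^(j+1) := by ring

lemma appr_pow_le (n a b : ℕ) (hb : 0 < b) : (appr n a b)^b ≤ n^b * a :=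
  Nat.findGreatest_spec (P := fun m => m ^ b ≤ n ^ b * a) (m := 0) (Nat.zero_le _)
    (by simp [Nat.zero_pow hb])

lemma lt_appr_succ_pow (n a b : ℕ) (hb : 0 < b) : n^b * a < (appr n a b + 1)^b := by
  by_cases h : appr n a b + 1 ≤ n^b * a
  · have := Nat.findGreatest_is_greatest (P := fun m => m ^ b ≤ n ^ b * a)
      (lt_add_one (appr n a b)) h
    omega
  · calc n^b * a < appr n a b + 1 := by omega
      _ ≤ (appr n a b + 1)^b := Nat.le_self_pow hb.ne' _

lemma le_appr (n a b : ℕ) (ha : 1 ≤ a) (hb : 0 < b) : n ≤ appr n a b := by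
  apply Nat.le_findGreatest
  · calc n ≤ n^b := Nat.le_self_pow hb.ne' _
      _ ≤ n^b * a := Nat.le_mul_of_pos_right _ ha
  · exact Nat.le_mul_of_pos_right _ ha

theorem stmt_10 :
    StrictMono (fun n : ℕ => (2 : ℕ) ^ n) ∧
      ∀ p r q s : ℕ, 0 < q → 0 < s → p * s < r * q →
        ∃ N : ℕ, ∀ n : ℕ, N ≤ n →
          (appr n (2 ^ p) q : ℚ) / (n : ℚ) < (appr n (2 ^ r) s : ℚ) / (n : ℚ) := by
  constructor
  · exact fun a b h => Nat.pow_lt_pow_right (by norm_num) h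
  · intro p r q s hq hs hpr
    refine ⟨q*s*2^(q*s)+1, fun n hn => ?_⟩
    set A := appr n (2^p) q with hA
    set B := appr n (2^r) s with hB
    have hn1 : 0 < n := by omega
    have hA1 : A^q ≤ n^q * 2^p := appr_pow_le n (2^p) q hq
    have hB2 : n^s * 2^r < (B+1)^s := lt_appr_succ_pow n (2^r) s hs
    have hBn : n ≤ B := le_appr n (2^r) s Nat.one_le_two_pow hs
    have hAB : A < B := by
      by_contra h
      push_neg at h
      have e1 : B^(q*s) ≤ n^(q*s) * 2^(p*s) := by
        calc B^(q*s) ≤ A^(q*s) := Nat.pow_le_pow_left h _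
          _ = (A^q)^s := by rw [← pow_mul]
          _ ≤ (n^q*2^p)^s := Nat.pow_le_pow_left hA1 _
          _ = n^(q*s)*2^(p*s) := by rw [mul_pow, ← pow_mul, ← pow_mul]
      have e2 : n^(q*s) * 2^(r*q) < (B+1)^(q*s) := by
        calc n^(q*s)*2^(r*q) = (n^s*2^r)^q := by
              rw [mul_pow, ← pow_mul, ← pow_mul, Nat.mul_comm s q, Nat.mul_comm r q]
          _ < ((B+1)^s)^q := Nat.pow_lt_pow_left hB2 hq.ne'
          _ = (B+1)^(q*s) := by rw [← pow_mul, Nat.mul_comm s q]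
      have e3 : (B+1)^(q*s) ≤ 2*B^(q*s) :=
        two_mul_bound (q*s) B (by omega)
      have e4 : 2*2^(p*s) ≤ 2^(r*q) := by
        calc 2*2^(p*s) = 2^(p*s+1) := by rw [pow_succ]; ring
          _ ≤ 2^(r*q) := Nat.pow_le_pow_right (by norm_num) (by omega)
      nlinarith [pow_pos hn1 (q*s)]
    have hcast : (A:ℚ) < B := by exact_mod_cast hAB
    have hnq : (0:ℚ) < n := by exact_mod_cast hn1
    exact div_lt_div_of_pos_right hcast hnq
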